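/- arXiv:math/0210280 — 2 statements merged into one kernel-verified Lean document; each statement's English description precedes it below -/
import Mathlib

section
/- Define the sequence C : ℕ → ℝ by C(2) = 1 and C(N) = (N/2)·(2·C(N−1)+1) for N ≥ 3. Let N ≥ 3 and let Σ = (σ₁,…,σₙ) be a symbolic collision sequence on the vertex set V = {1,…,N} which is C(N)-rich on V. Then there exist a vertex v ∈ V and indices 1 ≤ p < q ≤ n such that: (i) v ∈ σ_p and v ∈ σ_q; (ii) v ∉ σ_j for every j with p < j < q; (iii) if σ_p = σ_q then there exists j with p < j < q and σ_p ∩ σ_j ≠ ∅; and (iv) the subsequence Σ′ of Σ consisting of those terms σ_j with v ∉ σ_j is (2·C(N−1)+1)-rich on the vertex set V∖{v}. -/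
/-- The graph on `V` whose edges are the collision pairs `σ j` for indices
`a < j ≤ b` of the symbolic collision sequence `σ`. -/
def segGraph {V : Type*} [DecidableEq V] (σ : ℕ → Finset V) (a b : ℕ) : SimpleGraph V :=
  SimpleGraph.fromRel (fun u w => ∃ j, a < j ∧ j ≤ b ∧ σ j = {u, w})

/-- `Rich G n C` : there are `m ≥ C` indices
`0 ≤ a₁ < b₁ ≤ a₂ < b₂ ≤ … ≤ a_m < b_m ≤ n` such that each of the segment graphs
`G (a l) (b l)` is connected. -/
def Rich {V : Type*} (G : ℕ → ℕ → SimpleGraph V) (n : ℕ) (C : ℝ) : Prop :=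
  ∃ m : ℕ, C ≤ (m : ℝ) ∧ ∃ a b : ℕ → ℕ,
    (∀ l, 1 ≤ l → l ≤ m → a l < b l) ∧
    (∀ l, 1 ≤ l → l + 1 ≤ m → b l ≤ a (l + 1)) ∧
    (∀ l, 1 ≤ l → l ≤ m → b l ≤ n) ∧
    (∀ l, 1 ≤ l → l ≤ m → (G (a l) (b l)).Connected)

/-- The graph on the vertices other than `v` built from the non-`v` collisions. -/
def Hgraph {N : ℕ} (σ : ℕ → Finset (Fin N)) (v : Fin N) (a b : ℕ) :
    SimpleGraph {x : Fin N // x ≠ v} :=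
  SimpleGraph.fromRel (fun u w => ∃ j, a < j ∧ j ≤ b ∧ σ j = {u.1, w.1})

section Aux

variable {N : ℕ} {σ : ℕ → Finset (Fin N)}

/-- A walk from inside `A` to outside `A` crosses the boundary. -/
lemma walk_cross {V : Type*} {G : SimpleGraph V} {x y : V}
    (p : G.Walk x y) (A : Finset V) [DecidableEq V]
    (hx : x ∈ A) (hy : y ∉ A) :
    ∃ c d, G.Adj c d ∧ c ∈ A ∧ d ∉ A := by
  induction p with
  | nil => exact absurd hx hy
  | @cons u w z h p ih =>
    by_cases hw : w ∈ A
    · exact ih hw hy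
    · exact ⟨u, w, h, hx, hw⟩

/-- In a connected segment graph, every vertex collides. -/
lemma vertex_collides {a b : ℕ} (hN : 3 ≤ N)
    (h : (segGraph σ a b).Connected) (v : Fin N) :
    ∃ j, a < j ∧ j ≤ b ∧ v ∈ σ j := by
  have hcard : 1 < Fintype.card (Fin N) := by simp; omega
  obtain ⟨w, hw⟩ := Fintype.exists_ne_of_one_lt_card hcard v
  obtain ⟨p⟩ := h.preconnected v w
  cases p with
  | nil => exact absurd rfl hw
  | cons hadj p =>
    rw [segGraph, SimpleGraph.fromRel_adj] at hadj
    obtain ⟨-, ⟨j, h1, h2, h3⟩ | ⟨j, h1, h2, h3⟩⟩ := hadj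
    · exact ⟨j, h1, h2, by rw [h3]; simp⟩
    · exact ⟨j, h1, h2, by rw [h3]; simp⟩

/-- Transfer a walk in the segment graph avoiding `v` to the deleted graph. -/
lemma transfer_walk {a b : ℕ} {v : Fin N} :
    ∀ {y u : Fin N} (p : (segGraph σ a b).Walk y u), v ∉ p.support →
      ∀ (hy : y ≠ v) (hu : u ≠ v),
      (Hgraph σ v a b).Reachable ⟨y, hy⟩ ⟨u, hu⟩ := by
  intro y u p
  induction p with
  | nil => intro _ hy hu; rfl
  | @cons c d e h p ih =>
    intro hv hy hu
    rw [SimpleGraph.Walk.support_cons] at hv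
    have hv1 : v ∉ p.support := fun hmem => hv (List.mem_cons_of_mem _ hmem)
    have hd : d ≠ v := fun e => by
      exact hv1 (e ▸ p.start_mem_support)
    have hadj : (Hgraph σ v a b).Adj ⟨c, hy⟩ ⟨d, hd⟩ := by
      rw [segGraph, SimpleGraph.fromRel_adj] at h
      obtain ⟨hne, ⟨j, h1, h2, h3⟩ | ⟨j, h1, h2, h3⟩⟩ := h
      · exact (SimpleGraph.fromRel_adj _ _ _).mpr
          ⟨by simp [Subtype.ext_iff]; exact hne, Or.inl ⟨j, h1, h2, h3⟩⟩
      · exact (SimpleGraph.fromRel_adj _ _ _).mpr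
          ⟨by simp [Subtype.ext_iff]; exact hne, Or.inr ⟨j, h1, h2, h3⟩⟩
    exact hadj.reachable.trans (ih hv1 hd hu)

/-- A vertex at maximal distance from `u` is not a cut vertex. -/
lemma noncut {a b : ℕ} (hconn : (segGraph σ a b).Connected) {u v : Fin N}
    (huv : u ≠ v)
    (hmax : ∀ x y : Fin N, (segGraph σ a b).dist x y ≤ (segGraph σ a b).dist u v) :
    (Hgraph σ v a b).Connected := by
  set G := segGraph σ a b with hG
  rw [SimpleGraph.connected_iff]
  refine ⟨?_, ⟨⟨u, huv⟩⟩⟩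
  have key : ∀ (z : {x : Fin N // x ≠ v}), (Hgraph σ v a b).Reachable z ⟨u, huv⟩ := by
    rintro ⟨y, hy⟩
    obtain ⟨p, hp⟩ := (hconn.preconnected y u).exists_walk_length_eq_dist
    have hvs : v ∉ p.support := by
      intro hvp
      have hsplit := p.take_spec hvp
      have hlen : (p.takeUntil v hvp).length + (p.dropUntil v hvp).length = p.length := by
        conv_rhs => rw [← hsplit]
        rw [SimpleGraph.Walk.length_append]
      have h1 : 1 ≤ (p.takeUntil v hvp).length := by
        rcases Nat.eq_zero_or_pos (p.takeUntil v hvp).length with h0 | h0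
        · exact absurd (SimpleGraph.Walk.eq_of_length_eq_zero h0) hy
        · exact h0
      have h2 : G.dist v u ≤ (p.dropUntil v hvp).length :=
        SimpleGraph.dist_le _
      have h3 : G.dist y u ≤ G.dist v u := by
        rw [SimpleGraph.dist_comm (u := v)]; exact hmax y u
      omega
    exact transfer_walk p hvs hy huv
  intro z w
  exact (key z).trans (key w).symm

/-- Each connected segment has at least two non-cut vertices. -/
lemma two_noncut {a b : ℕ} (hN : 3 ≤ N)
    (hconn : (segGraph σ a b).Connected) :
    ∃ u v : Fin N, u ≠ v ∧ (Hgraph σ u a b).Connected ∧ (Hgraph σ v a b).Connected := by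
  classical
  set G := segGraph σ a b with hG
  obtain ⟨⟨u, v⟩, -, hmax⟩ :=
    Finset.exists_max_image (Finset.univ : Finset (Fin N × Fin N))
      (fun p => G.dist p.1 p.2) ⟨(⟨0, by omega⟩, ⟨0, by omega⟩), Finset.mem_univ _⟩
  have hmax' : ∀ x y : Fin N, G.dist x y ≤ G.dist u v := by
    intro x y; exact hmax (x, y) (Finset.mem_univ _)
  have huv : u ≠ v := by
    intro h
    subst h
    have hcard : 1 < Fintype.card (Fin N) := by simp only [Fintype.card_fin]; omega
    obtain ⟨w, hw⟩ := Fintype.exists_ne_of_one_lt_card hcard u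
    have hpos : 0 < G.dist w u := hconn.pos_dist_of_ne hw
    have hle := hmax' w u
    rw [SimpleGraph.dist_self] at hle
    omega
  have h1 : (Hgraph σ v a b).Connected := noncut hconn huv hmax'
  have h2 : (Hgraph σ u a b).Connected := by
    refine noncut hconn huv.symm ?_
    intro x y
    rw [SimpleGraph.dist_comm (u := v)]
    exact hmax' x y
  exact ⟨u, v, huv, h2, h1⟩

end Aux

/-- Lemma 3.1: if `Σ` is `C(N)`-rich on `{1,…,N}`, then some vertex `v` and indices
`p < q` satisfy (i)–(iii), and the subsequence obtained by discarding all edges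
containing `v` is `(2·C(N−1)+1)`-rich on the remaining vertices. -/
theorem lemma_3_1
    (C : ℕ → ℝ) (hC2 : C 2 = 1)
    (hCrec : ∀ N : ℕ, 3 ≤ N → C N = ((N : ℝ) / 2) * (2 * C (N - 1) + 1))
    (N : ℕ) (hN : 3 ≤ N) (n : ℕ) (σ : ℕ → Finset (Fin N))
    (hσ : ∀ j ∈ Finset.Icc 1 n, (σ j).card = 2)
    (hrich : Rich (segGraph σ) n (C N)) :
    ∃ v : Fin N, ∃ p q : ℕ, 1 ≤ p ∧ p < q ∧ q ≤ n ∧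
      v ∈ σ p ∧ v ∈ σ q ∧
      (∀ j, p < j → j < q → v ∉ σ j) ∧
      (σ p = σ q → ∃ j, p < j ∧ j < q ∧ (σ p ∩ σ j).Nonempty) ∧
      Rich (fun a b => SimpleGraph.fromRel
          (fun (u w : {x : Fin N // x ≠ v}) => ∃ j, a < j ∧ j ≤ b ∧ σ j = {u.1, w.1}))
        n (2 * C (N - 1) + 1) := by
  classical
  obtain ⟨m, hm, a, b, h1, h2, h3, h4⟩ := hrich
  -- C M ≥ 1 for M ≥ 2
  have hCge1 : ∀ M, 2 ≤ M → 1 ≤ C M := by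
    intro M hM
    induction M, hM using Nat.le_induction with
    | base => rw [hC2]
    | succ M hM ih =>
      have h := hCrec (M + 1) (by omega)
      simp only [Nat.add_sub_cancel] at h
      rw [h]
      have : (2 : ℝ) ≤ (M : ℝ) := by exact_mod_cast hM
      push_cast
      nlinarith
  have hCN1 : 1 ≤ C (N - 1) := hCge1 (N - 1) (by omega)
  have hNR : (3 : ℝ) ≤ (N : ℝ) := by exact_mod_cast hN
  have hCNval := hCrec N hN
  have hCN : (9 : ℝ) / 2 ≤ C N := by rw [hCNval]; nlinarith
  have hm3 : 3 ≤ m := by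
    have : (3 : ℝ) ≤ (m : ℝ) := by linarith
    exact_mod_cast this
  -- chain: b l ≤ a l' for l < l'
  have chain : ∀ l l', 1 ≤ l → l < l' → l' ≤ m → b l ≤ a l' := by
    intro l l' hl hll' hl'm
    have : ∀ l'', l + 1 ≤ l'' → l'' ≤ m → b l ≤ a l'' := by
      intro l'' h''
      induction l'', h'' using Nat.le_induction with
      | base => intro hbm; exact h2 l hl hbm
      | succ k hk ih =>
        intro hkm
        calc b l ≤ a k := ih (by omega)
          _ ≤ b k := le_of_lt (h1 k (by omega) (by omega))
          _ ≤ a (k + 1) := h2 k (by omega) hkm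
    exact this l' hll' hl'm
  -- Part A: pigeonhole to find v
  let cnt : Fin N → ℕ := fun v =>
    ((Finset.Icc 1 m).filter (fun l => (Hgraph σ v (a l) (b l)).Connected)).card
  have hsum : 2 * m ≤ ∑ v : Fin N, cnt v := by
    have hswap : ∑ v : Fin N, cnt v
        = ∑ l ∈ Finset.Icc 1 m,
            (Finset.univ.filter (fun v : Fin N => (Hgraph σ v (a l) (b l)).Connected)).card := by
      simp only [cnt, Finset.card_filter]
      rw [Finset.sum_comm]
    rw [hswap]
    calc 2 * m = ∑ _l ∈ Finset.Icc 1 m, 2 := by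
          rw [Finset.sum_const, Nat.card_Icc]; simp; ring
      _ ≤ _ := by
          refine Finset.sum_le_sum ?_
          intro l hl
          rw [Finset.mem_Icc] at hl
          obtain ⟨x, y, hxy, hx, hy⟩ := two_noncut hN (h4 l hl.1 hl.2)
          have hsub : ({x, y} : Finset (Fin N)) ⊆
              Finset.univ.filter (fun v : Fin N => (Hgraph σ v (a l) (b l)).Connected) := by
            intro z hz
            rw [Finset.mem_insert, Finset.mem_singleton] at hz
            rcases hz with rfl | rfl <;> simp [hx, hy]
          calc 2 = ({x, y} : Finset (Fin N)).card := by
                rw [Finset.card_insert_of_notMem (by simpa using hxy), Finset.card_singleton]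
            _ ≤ _ := Finset.card_le_card hsub
  obtain ⟨v, -, hv⟩ :=
    Finset.exists_le_of_sum_le (s := (Finset.univ : Finset (Fin N)))
      (f := fun _ => 2 * m) (g := fun v => N * cnt v) ⟨⟨0, by omega⟩, Finset.mem_univ _⟩
      (by
        rw [Finset.sum_const, ← Finset.mul_sum]
        simp only [Finset.card_univ, Fintype.card_fin, smul_eq_mul]
        calc N * (2 * m) ≤ N * ∑ v : Fin N, cnt v := by
              exact Nat.mul_le_mul_left N hsum
          _ = _ := rfl)
  -- the count is at least 2 C(N-1) + 1
  have hcnt : 2 * C (N - 1) + 1 ≤ (cnt v : ℝ) := by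
    have hNK : (N : ℝ) * (2 * C (N - 1) + 1) = 2 * C N := by rw [hCNval]; ring
    have hcast : (2 * m : ℝ) ≤ (N : ℝ) * (cnt v : ℝ) := by exact_mod_cast hv
    have h2m : 2 * C N ≤ (2 * m : ℝ) := by
      have : C N ≤ (m : ℝ) := hm
      linarith
    have hNpos : (0 : ℝ) < (N : ℝ) := by linarith
    nlinarith
  refine ⟨v, ?_⟩
  -- Part (iv) : richness of the reduced sequence
  have hRich : Rich (fun a' b' => SimpleGraph.fromRel
      (fun (u w : {x : Fin N // x ≠ v}) => ∃ j, a' < j ∧ j ≤ b' ∧ σ j = {u.1, w.1}))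
      n (2 * C (N - 1) + 1) := by
    set L := (Finset.Icc 1 m).filter (fun l => (Hgraph σ v (a l) (b l)).Connected) with hL
    set c := L.card with hc
    let e := L.orderIsoOfFin (k := c) rfl
    let idx : ℕ → ℕ := fun l => if h : l - 1 < c then ((e ⟨l - 1, h⟩ : L) : ℕ) else 0
    have hidx_mem : ∀ l, 1 ≤ l → l ≤ c → idx l ∈ L := by
      intro l hl hlc
      have h : l - 1 < c := by omega
      simp only [idx, dif_pos h]
      exact (e ⟨l - 1, h⟩).2
    have hidx_range : ∀ l, 1 ≤ l → l ≤ c → 1 ≤ idx l ∧ idx l ≤ m := by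
      intro l hl hlc
      have := hidx_mem l hl hlc
      rw [hL, Finset.mem_filter, Finset.mem_Icc] at this
      exact this.1
    have hidx_good : ∀ l, 1 ≤ l → l ≤ c →
        (Hgraph σ v (a (idx l)) (b (idx l))).Connected := by
      intro l hl hlc
      have := hidx_mem l hl hlc
      rw [hL, Finset.mem_filter] at this
      exact this.2
    have hidx_mono : ∀ l, 1 ≤ l → l + 1 ≤ c → idx l < idx (l + 1) := by
      intro l hl hlc
      have ha : l - 1 < c := by omega
      have hb : l + 1 - 1 < c := by omega
      simp only [idx, dif_pos ha, dif_pos hb]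
      have : (⟨l - 1, ha⟩ : Fin c) < ⟨l + 1 - 1, hb⟩ := by
        simp [Fin.lt_def]; omega
      have := e.strictMono this
      exact this
    refine ⟨c, hcnt, fun l => a (idx l), fun l => b (idx l), ?_, ?_, ?_, ?_⟩
    · intro l hl hlc
      obtain ⟨hi1, hi2⟩ := hidx_range l hl hlc
      exact h1 _ hi1 hi2
    · intro l hl hlc
      obtain ⟨hi1, hi2⟩ := hidx_range l hl (by omega)
      obtain ⟨hj1, hj2⟩ := hidx_range (l + 1) (by omega) hlc
      exact chain _ _ hi1 (hidx_mono l hl hlc) hj2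
    · intro l hl hlc
      obtain ⟨hi1, hi2⟩ := hidx_range l hl hlc
      exact h3 _ hi1 hi2
    · intro l hl hlc
      exact hidx_good l hl hlc
  -- Part B : existence of the pair p < q
  suffices hB : ∃ p q : ℕ, 1 ≤ p ∧ p < q ∧ q ≤ n ∧ v ∈ σ p ∧ v ∈ σ q ∧
      (∀ j, p < j → j < q → v ∉ σ j) ∧
      (σ p = σ q → ∃ j, p < j ∧ j < q ∧ (σ p ∩ σ j).Nonempty) by
    obtain ⟨p, q, c1, c2, c3, c4, c5, c6, c7⟩ := hB
    exact ⟨p, q, c1, c2, c3, c4, c5, c6, c7, hRich⟩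
  by_contra hcon
  push_neg at hcon
  have H : ∀ p q, 1 ≤ p → p < q → q ≤ n → v ∈ σ p → v ∈ σ q →
      (∀ j, p < j → j < q → v ∉ σ j) →
      σ p = σ q ∧ ∀ j, p < j → j < q → σ p ∩ σ j = ∅ := by
    intro p q hp hpq hq hvp hvq hgap
    obtain ⟨e1, e2⟩ := hcon p q hp hpq hq hvp hvq hgap
    refine ⟨e1, fun j hj1 hj2 => ?_⟩
    rw [← Finset.not_nonempty_iff_eq_empty]
    exact Finset.not_nonempty_iff_eq_empty.mpr (e2 j hj1 hj2)
  -- all collisions of v between two of its collisions have equal edge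
  have chainEq : ∀ d s t, 1 ≤ s → t ≤ n → v ∈ σ s → v ∈ σ t → s < t → t - s ≤ d →
      σ s = σ t ∧ ∀ j, s < j → j < t → v ∉ σ j → σ s ∩ σ j = ∅ := by
    intro d
    induction d with
    | zero => intro s t _ _ _ _ h1' h2'; omega
    | succ d ih =>
      intro s t hs ht hvs hvt hst hd
      by_cases hr : ∃ r, s < r ∧ r < t ∧ v ∈ σ r
      · obtain ⟨r, hr1, hr2, hr3⟩ := hr
        obtain ⟨e1, e2⟩ := ih s r hs (by omega) hvs hr3 hr1 (by omega)
        obtain ⟨f1, f2⟩ := ih r t (by omega) ht hr3 hvt hr2 (by omega)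
        refine ⟨e1.trans f1, ?_⟩
        intro j hj1 hj2 hvj
        rcases lt_trichotomy j r with h | h | h
        · exact e2 j hj1 h hvj
        · exact absurd (h ▸ hr3) hvj
        · rw [e1]; exact f2 j h hj2 hvj
      · push_neg at hr
        have hgap : ∀ j, s < j → j < t → v ∉ σ j := fun j hj1 hj2 => hr j hj1 hj2
        obtain ⟨e1, e2⟩ := H s t hs hst ht hvs hvt hgap
        exact ⟨e1, fun j hj1 hj2 _ => e2 j hj1 hj2⟩
  -- collisions of v in segments 1, 2, 3
  obtain ⟨s, hs1, hs2, hs3⟩ := vertex_collides hN (h4 1 le_rfl (by omega)) v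
  obtain ⟨t, ht1, ht2, ht3⟩ := vertex_collides hN (h4 3 (by omega) hm3) v
  have hb1a2 : b 1 ≤ a 2 := h2 1 le_rfl (by omega)
  have hb2a3 : b 2 ≤ a 3 := h2 2 (by omega) (by omega)
  have ha2b2 : a 2 < b 2 := h1 2 (by omega) (by omega)
  have hsn : s ≤ n := le_trans hs2 (h3 1 le_rfl (by omega))
  have htn : t ≤ n := le_trans ht2 (h3 3 (by omega) hm3)
  have hs1' : 1 ≤ s := by omega
  have hst : s < t := by omega
  -- σ s = {v, u}
  have hcard : (σ s).card = 2 := hσ s (Finset.mem_Icc.mpr ⟨hs1', hsn⟩)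
  obtain ⟨x, y, hxy, hset⟩ := Finset.card_eq_two.mp hcard
  have hvmem : v = x ∨ v = y := by
    have := hs3; rw [hset, Finset.mem_insert, Finset.mem_singleton] at this
    exact this
  obtain ⟨u, hune, hsu⟩ : ∃ u, u ≠ v ∧ σ s = {v, u} := by
    rcases hvmem with h | h
    · exact ⟨y, fun e => hxy (h ▸ e.symm), by rw [hset, h]⟩
    · exact ⟨x, fun e => hxy (h ▸ e), by rw [hset, h, Finset.pair_comm]⟩
  -- find w outside {v, u}
  obtain ⟨w, hw⟩ : ∃ w : Fin N, w ∉ ({v, u} : Finset (Fin N)) := by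
    by_contra hall
    push_neg at hall
    have : (Finset.univ : Finset (Fin N)).card ≤ ({v, u} : Finset (Fin N)).card :=
      Finset.card_le_card (fun z _ => hall z)
    have h2' : ({v, u} : Finset (Fin N)).card ≤ 2 := by
      apply le_trans (Finset.card_insert_le _ _); simp
    simp only [Finset.card_univ, Fintype.card_fin] at this
    omega
  -- walk from u to w in segment 2, crossing the boundary of {v, u}
  have hu_mem : u ∈ ({v, u} : Finset (Fin N)) := by simp
  obtain ⟨p⟩ := (h4 2 (by omega) (by omega)).preconnected u w
  obtain ⟨cc, dd, hadj, hcA, hdA⟩ := walk_cross p ({v, u} : Finset (Fin N)) hu_mem hw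
  rw [segGraph, SimpleGraph.fromRel_adj] at hadj
  have hdv : dd ≠ v := fun e => hdA (by rw [e]; simp)
  have hdu : dd ≠ u := fun e => hdA (by rw [e]; simp)
  obtain ⟨hne, hrel⟩ := hadj
  obtain ⟨j, hj1, hj2, hj3⟩ : ∃ j, a 2 < j ∧ j ≤ b 2 ∧ σ j = {cc, dd} := by
    rcases hrel with ⟨j, hj1, hj2, hj3⟩ | ⟨j, hj1, hj2, hj3⟩
    · exact ⟨j, hj1, hj2, hj3⟩
    · exact ⟨j, hj1, hj2, by rw [hj3, Finset.pair_comm]⟩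
  have hsj : s < j := by omega
  have hjt : j < t := by omega
  have hj1n : 1 ≤ j := by omega
  have hjn : j ≤ n := by
    have := h3 2 (by omega) (by omega); omega
  rw [Finset.mem_insert, Finset.mem_singleton] at hcA
  rcases hcA with hcv | hcu
  · -- cc = v : then σ j is a v-collision, so σ j = σ s = {v, u}, but dd ∉ {v,u}
    have hvj : v ∈ σ j := by rw [hj3, ← hcv]; simp
    have := (chainEq (j - s) s j hs1' hjn hs3 hvj hsj le_rfl).1
    have hdd : dd ∈ σ s := by rw [this, hj3]; simp
    rw [hsu] at hdd
    exact hdA hdd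
  · -- cc = u : then v ∉ σ j, so σ s ∩ σ j = ∅, but u is in both
    have hvj : v ∉ σ j := by
      rw [hj3]
      simp only [Finset.mem_insert, Finset.mem_singleton]
      rintro (h | h)
      · exact hune (hcu ▸ h.symm)
      · exact hdv h.symm
    have hemp := (chainEq (t - s) s t hs1' htn hs3 ht3 hst le_rfl).2 j hsj hjt hvj
    have humem : u ∈ σ s ∩ σ j := by
      rw [Finset.mem_inter, hsu, hj3, hcu]
      simp
    rw [hemp] at humem
    exact absurd humem (Finset.notMem_empty u)
end

section
/- Let p, q ≥ 1 be integers and let A ⊆ ℝ^p × ℝ^q be a set whose (p+q−1)-dimensional Hausdorff measure (with respect to the Euclidean metric on ℝ^{p+q}) is zero. Then for Lebesgue-almost every y ∈ ℝ^p, the slice A_y = {z ∈ ℝ^q : (y,z) ∈ A} has zero (q−1)-dimensional Hausdorff measure in ℝ^q. -/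
open Set Filter
open scoped ENNReal NNReal Topology

open MeasureTheory Set Filter
open scoped ENNReal NNReal Topology

namespace HausdorffSlicingAux

variable {p q : ℕ}

/-- The isometric embedding of the fiber over `y`. -/
def fiberEmb (y : EuclideanSpace ℝ (Fin p)) (z : EuclideanSpace ℝ (Fin q)) :
    EuclideanSpace ℝ (Fin p ⊕ Fin q) := WithLp.toLp 2 (Sum.elim y z)

/-- Projection onto the first factor. -/
def projP (x : EuclideanSpace ℝ (Fin p ⊕ Fin q)) : EuclideanSpace ℝ (Fin p) :=
  WithLp.toLp 2 (fun i => x (Sum.inl i))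

lemma isometry_fiberEmb (y : EuclideanSpace ℝ (Fin p)) :
    Isometry (fiberEmb (q := q) y) := by
  apply Isometry.of_dist_eq
  intro z z'
  rw [EuclideanSpace.dist_eq, EuclideanSpace.dist_eq]
  congr 1
  rw [Fintype.sum_sum_type]
  simp [fiberEmb]

lemma dist_projP_le (x x' : EuclideanSpace ℝ (Fin p ⊕ Fin q)) :
    dist (projP x) (projP x') ≤ dist x x' := by
  rw [EuclideanSpace.dist_eq, EuclideanSpace.dist_eq]
  apply Real.sqrt_le_sqrt
  rw [Fintype.sum_sum_type]
  exact le_add_of_nonneg_right (Finset.sum_nonneg fun _ _ => sq_nonneg _)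

lemma edist_projP_le (x x' : EuclideanSpace ℝ (Fin p ⊕ Fin q)) :
    edist (projP x) (projP x') ≤ edist x x' := by
  rw [edist_dist, edist_dist]
  exact ENNReal.ofReal_le_ofReal (dist_projP_le x x')

end HausdorffSlicingAux

open HausdorffSlicingAux


open MeasureTheory

/-- The 'Fubini-type' slicing argument of Proposition 4.2: if
`A ⊆ ℝ^p × ℝ^q = ℝ^{p+q}` has zero `(p+q−1)`-dimensional Hausdorff measure, then
for Lebesgue-almost every `y ∈ ℝ^p` the slice `A_y` has zero `(q−1)`-dimensional
Hausdorff measure in `ℝ^q`.  Here `ℝ^{p+q}` is the Euclidean space indexed by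
`Fin p ⊕ Fin q` and the point of the product corresponding to `(y, z)` is
`Sum.elim y z`. -/
theorem hausdorff_slicing
    (p q : ℕ) (hp : 1 ≤ p) (hq : 1 ≤ q)
    (A : Set (EuclideanSpace ℝ (Fin p ⊕ Fin q)))
    (hA : μH[(p : ℝ) + (q : ℝ) - 1] A = 0) :
    ∀ᵐ y : EuclideanSpace ℝ (Fin p),
      μH[(q : ℝ) - 1]
        {z : EuclideanSpace ℝ (Fin q) |
          (WithLp.toLp 2 (Sum.elim y z) : EuclideanSpace ℝ (Fin p ⊕ Fin q)) ∈ A} = 0 := by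
  classical
  have hq' : (0 : ℝ) ≤ (q : ℝ) - 1 := by
    have : (1 : ℝ) ≤ (q : ℝ) := by exact_mod_cast hq
    linarith
  have hp' : (0 : ℝ) ≤ (p : ℝ) := by positivity
  -- Step 1: extract good covers
  rw [Measure.hausdorffMeasure_apply] at hA
  have key : ∀ k : ℕ, ∃ t : ℕ → Set (EuclideanSpace ℝ (Fin p ⊕ Fin q)),
      (A ⊆ ⋃ n, t n) ∧ (∀ n, EMetric.diam (t n) ≤ ((k : ℝ≥0∞))⁻¹) ∧
      (∑' n, ⨆ _ : (t n).Nonempty,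
          EMetric.diam (t n) ^ ((p : ℝ) + (q : ℝ) - 1)) < ((k : ℝ≥0∞))⁻¹ := by
    intro k
    have hkpos : (0 : ℝ≥0∞) < ((k : ℝ≥0∞))⁻¹ :=
      ENNReal.inv_pos.mpr (ENNReal.natCast_ne_top k)
    simp only [ENNReal.iSup_eq_zero] at hA
    have h1 := hA ((k : ℝ≥0∞))⁻¹ hkpos
    have h3 : (⨅ (t : ℕ → Set (EuclideanSpace ℝ (Fin p ⊕ Fin q)))
        (_ : A ⊆ ⋃ n, t n) (_ : ∀ n, EMetric.diam (t n) ≤ ((k : ℝ≥0∞))⁻¹),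
        ∑' n, ⨆ _ : (t n).Nonempty,
          EMetric.diam (t n) ^ ((p : ℝ) + (q : ℝ) - 1)) < ((k : ℝ≥0∞))⁻¹ := by
      exact h1.trans_lt hkpos
    obtain ⟨t, ht⟩ := iInf_lt_iff.mp h3
    obtain ⟨hcov, ht⟩ := iInf_lt_iff.mp ht
    obtain ⟨hdiam, hlt⟩ := iInf_lt_iff.mp ht
    exact ⟨t, hcov, hdiam, hlt⟩
  choose t hcov hdiam hsum using key
  -- Step 2: the auxiliary functions
  set C : ℝ≥0∞ := volume (Metric.ball (0 : EuclideanSpace ℝ (Fin p)) 1) with hC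
  have hCne : C ≠ ∞ := measure_ball_lt_top.ne
  set c : ℕ → ℕ → EuclideanSpace ℝ (Fin p) := fun k n =>
    if h : (t k n).Nonempty then projP h.some else 0 with hc
  set S : ℕ → ℕ → Set (EuclideanSpace ℝ (Fin p)) := fun k n =>
    Metric.closedBall (c k n) ((EMetric.diam (t k n)).toReal) with hSdef
  set g : ℕ → EuclideanSpace ℝ (Fin p) → ℝ≥0∞ := fun k y =>
    ∑' n, (S k n).indicator (fun _ => EMetric.diam (t k n) ^ ((q : ℝ) - 1)) y with hg
  have hgmeas : ∀ k, Measurable (g k) := fun k =>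
    Measurable.ennreal_tsum fun n =>
      measurable_const.indicator measurableSet_closedBall
  -- volume bound on the balls
  have hvol : ∀ k n, volume (S k n) ≤ EMetric.diam (t k n) ^ (p : ℝ) * C := by
    intro k n
    rw [hSdef]
    rw [Measure.addHaar_closedBall _ _ ENNReal.toReal_nonneg]
    have h1 : ENNReal.ofReal ((EMetric.diam (t k n)).toReal
        ^ Module.finrank ℝ (EuclideanSpace ℝ (Fin p))) ≤ EMetric.diam (t k n) ^ (p : ℝ) := by
      rw [finrank_euclideanSpace_fin, ENNReal.ofReal_pow ENNReal.toReal_nonneg,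
        ← ENNReal.rpow_natCast]
      exact ENNReal.rpow_le_rpow ENNReal.ofReal_toReal_le hp'
    exact mul_le_mul_left h1 C
  -- integral bound
  have hint : ∀ k, (∫⁻ y, g k y) ≤ ((k : ℝ≥0∞))⁻¹ * C := by
    intro k
    rw [hg]
    simp only
    rw [lintegral_tsum fun n =>
      (measurable_const.indicator measurableSet_closedBall).aemeasurable]
    have hterm : ∀ n, (∫⁻ y, (S k n).indicator
        (fun _ => EMetric.diam (t k n) ^ ((q : ℝ) - 1)) y)
        ≤ (⨆ _ : (t k n).Nonempty,
            EMetric.diam (t k n) ^ ((p : ℝ) + (q : ℝ) - 1)) * C := by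
      intro n
      rw [lintegral_indicator_const measurableSet_closedBall]
      by_cases hne : (t k n).Nonempty
      · rw [iSup_pos hne]
        calc EMetric.diam (t k n) ^ ((q : ℝ) - 1) * volume (S k n)
            ≤ EMetric.diam (t k n) ^ ((q : ℝ) - 1)
              * (EMetric.diam (t k n) ^ (p : ℝ) * C) :=
              mul_le_mul_right (hvol k n) _
          _ = EMetric.diam (t k n) ^ ((p : ℝ) + (q : ℝ) - 1) * C := by
              rw [← mul_assoc, ← ENNReal.rpow_add_of_nonneg _ _ hq' hp']
              ring_nf
      · have hd0 : EMetric.diam (t k n) = 0 := by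
          rw [not_nonempty_iff_eq_empty.mp hne]; exact EMetric.diam_empty
        have : volume (S k n) = 0 := by
          refine le_antisymm ?_ zero_le
          calc volume (S k n) ≤ EMetric.diam (t k n) ^ (p : ℝ) * C := hvol k n
            _ = 0 := by
              rw [hd0, ENNReal.zero_rpow_of_pos (by positivity), zero_mul]
        rw [this, mul_zero]
        exact zero_le
    calc (∑' n, ∫⁻ y, (S k n).indicator
          (fun _ => EMetric.diam (t k n) ^ ((q : ℝ) - 1)) y)
        ≤ ∑' n, (⨆ _ : (t k n).Nonempty,
            EMetric.diam (t k n) ^ ((p : ℝ) + (q : ℝ) - 1)) * C :=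
          ENNReal.tsum_le_tsum hterm
      _ = (∑' n, ⨆ _ : (t k n).Nonempty,
            EMetric.diam (t k n) ^ ((p : ℝ) + (q : ℝ) - 1)) * C :=
          ENNReal.tsum_mul_right
      _ ≤ ((k : ℝ≥0∞))⁻¹ * C := mul_le_mul_left (hsum k).le C
  -- Step 3: Fatou
  have h0 : (∫⁻ y, liminf (fun k => g k y) atTop) = 0 := by
    refine le_antisymm ?_ zero_le
    calc (∫⁻ y, liminf (fun k => g k y) atTop)
        ≤ liminf (fun k => ∫⁻ y, g k y) atTop := lintegral_liminf_le hgmeas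
      _ ≤ liminf (fun k : ℕ => ((k : ℝ≥0∞))⁻¹ * C) atTop :=
          liminf_le_liminf (Eventually.of_forall hint)
      _ = 0 := by
          have : Tendsto (fun k : ℕ => ((k : ℝ≥0∞))⁻¹ * C) atTop (𝓝 (0 * C)) :=
            ENNReal.Tendsto.mul_const ENNReal.tendsto_inv_nat_nhds_zero (Or.inr hCne)
          rw [zero_mul] at this
          exact this.liminf_eq
  have hae : ∀ᵐ y : EuclideanSpace ℝ (Fin p),
      liminf (fun k => g k y) atTop = 0 :=
    (lintegral_eq_zero_iff (Measurable.liminf hgmeas)).mp h0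
  -- Step 4: conclude
  filter_upwards [hae] with y hy
  rw [← nonpos_iff_eq_zero, Measure.hausdorffMeasure_apply]
  refine iSup₂_le fun r hr => ?_
  rw [← hy]
  refine le_liminf_of_le (by isBoundedDefault) ?_
  have hev : ∀ᶠ k : ℕ in atTop, ((k : ℝ≥0∞))⁻¹ < r :=
    ENNReal.tendsto_inv_nat_nhds_zero.eventually_lt_const hr
  filter_upwards [hev, eventually_ge_atTop 1] with k hk hk1
  -- the covering of the slice
  have hfin : ∀ n, EMetric.diam (t k n) ≠ ∞ := fun n =>
    ((hdiam k n).trans_lt (by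
      calc ((k : ℝ≥0∞))⁻¹ ≤ 1 := ENNReal.inv_le_one.mpr (by exact_mod_cast hk1)
        _ < ∞ := ENNReal.one_lt_top)).ne
  set u : ℕ → Set (EuclideanSpace ℝ (Fin q)) := fun n => fiberEmb y ⁻¹' (t k n) with hu
  have hdiamu : ∀ n, EMetric.diam (u n) ≤ EMetric.diam (t k n) := by
    intro n
    calc EMetric.diam (u n) = EMetric.diam (fiberEmb y '' u n) :=
        ((isometry_fiberEmb y).ediam_image _).symm
      _ ≤ _ := EMetric.diam_mono (image_preimage_subset _ _)
  have hsubu : {z : EuclideanSpace ℝ (Fin q) |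
      (WithLp.toLp 2 (Sum.elim y z) : EuclideanSpace ℝ (Fin p ⊕ Fin q)) ∈ A} ⊆ ⋃ n, u n := by
    intro z hz
    have := hcov k hz
    rw [mem_iUnion] at this
    obtain ⟨n, hn⟩ := this
    exact mem_iUnion.mpr ⟨n, hn⟩
  refine iInf_le_of_le u (iInf_le_of_le hsubu (iInf_le_of_le
    (fun n => (hdiamu n).trans ((hdiam k n).trans hk.le)) ?_))
  refine ENNReal.tsum_le_tsum fun n => ?_
  refine iSup_le fun hne => ?_
  obtain ⟨z, hz⟩ := hne
  have htne : (t k n).Nonempty := ⟨fiberEmb y z, hz⟩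
  have hyS : y ∈ S k n := by
    have hcn : c k n = projP htne.some := dif_pos htne
    have h2 : projP (fiberEmb y z) = y := rfl
    have h1 : edist y (c k n) ≤ EMetric.diam (t k n) := by
      rw [hcn, ← h2]
      exact (edist_projP_le _ _).trans
        (EMetric.edist_le_diam_of_mem hz htne.some_mem)
    rw [hSdef]
    simp only [Metric.mem_closedBall]
    rw [dist_edist]
    exact ENNReal.toReal_mono (hfin n) h1
  have : (S k n).indicator (fun _ => EMetric.diam (t k n) ^ ((q : ℝ) - 1)) y
      = EMetric.diam (t k n) ^ ((q : ℝ) - 1) := indicator_of_mem hyS _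
  rw [this]
  exact ENNReal.rpow_le_rpow (hdiamu n) hq'
end
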